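/- For every integer k ≥ 3 and all positive integers m, n with 1 ≤ m ≤ n, f_k(m, n) = Σ_{ℓ ≡ 1 (mod k), 1 ≤ ℓ ≤ m} C(m−1, ℓ−1)·f_k(n−ℓ) − Σ_{ℓ ≡ 0 (mod k), k ≤ ℓ ≤ m} C(m−1, ℓ−1)·f_k(n−ℓ). (Equivalently f_k(m,n) = C(m−1,0)f_k(n−1) − C(m−1,k−1)f_k(n−k) + C(m−1,k)f_k(n−k−1) − C(m−1,2k−1)f_k(n−2k) + C(m−1,2k)f_k(n−2k−1) − ... .) -/
import Mathlib


/-- The value `w(i)` (1-based, taking values in `{1,...,n}`) of a permutation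
`w ∈ S_n`, with the convention `w(i) = 0` for `i` out of range. -/
def permVal (n : ℕ) (w : Equiv.Perm (Fin n)) (i : ℕ) : ℕ :=
  if h : i - 1 < n then (w ⟨i - 1, h⟩ : ℕ) + 1 else 0

/-- The set of starting indices (1-based) of `k`-descents of `w ∈ S_n`:
indices `i` with `1 ≤ i ≤ n - k + 1` such that `w(i) > w(i+1) > ⋯ > w(i+k-1)`. -/
def kDescentSet (k n : ℕ) (w : Equiv.Perm (Fin n)) : Finset ℕ :=
  (Finset.Icc 1 (n + 1 - k)).filter
    (fun i => ∀ j < k - 1, permVal n w (i + j + 1) < permVal n w (i + j))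

/-- `d_k(I,n)`: the number of permutations of `S_n` whose `k`-descent set is `I`. -/
def dI (k n : ℕ) (I : Finset ℕ) : ℕ :=
  (Finset.univ.filter (fun w : Equiv.Perm (Fin n) => kDescentSet k n w = I)).card

/-- `d_k(I,m,n)`: as `d_k(I,n)` but additionally requiring `w(1) = m`. -/
def dIm (k : ℕ) (I : Finset ℕ) (m n : ℕ) : ℕ :=
  (Finset.univ.filter
    (fun w : Equiv.Perm (Fin n) => kDescentSet k n w = I ∧ permVal n w 1 = m)).card

/-- `f_k(n) = d_k(∅, n)`, the number of `k`-descent-avoiding permutations in `S_n`. -/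
def fK (k n : ℕ) : ℕ := dI k n ∅

/-- `f_k(m,n) = d_k(∅, m, n)`. -/
def fKm (k m n : ℕ) : ℕ := dIm k ∅ m n

namespace KD

open Finset

/-! ### Basic facts about `permVal` -/

lemma permVal_eq (n : ℕ) (w : Equiv.Perm (Fin n)) (i : ℕ) (h1 : 1 ≤ i) (h2 : i ≤ n) :
    permVal n w i = (w ⟨i - 1, by omega⟩ : ℕ) + 1 := by
  rw [permVal, dif_pos]

lemma permVal_pos (n : ℕ) (w : Equiv.Perm (Fin n)) (i : ℕ) (h1 : 1 ≤ i) (h2 : i ≤ n) :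
    1 ≤ permVal n w i := by
  rw [permVal_eq n w i h1 h2]; omega

lemma permVal_le (n : ℕ) (w : Equiv.Perm (Fin n)) (i : ℕ) (h1 : 1 ≤ i) (h2 : i ≤ n) :
    permVal n w i ≤ n := by
  rw [permVal_eq n w i h1 h2]
  have := (w ⟨i - 1, by omega⟩).isLt
  omega

lemma permVal_injOn (n : ℕ) (w : Equiv.Perm (Fin n)) {i j : ℕ} (hi1 : 1 ≤ i) (hi2 : i ≤ n)
    (hj1 : 1 ≤ j) (hj2 : j ≤ n) (h : permVal n w i = permVal n w j) : i = j := by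
  rw [permVal_eq n w i hi1 hi2, permVal_eq n w j hj1 hj2] at h
  have h2 : w ⟨i - 1, by omega⟩ = w ⟨j - 1, by omega⟩ := Fin.ext (by omega)
  have h3 := w.injective h2
  have h4 : i - 1 = j - 1 := congrArg Fin.val h3
  omega

lemma perm_ext {n : ℕ} {w w' : Equiv.Perm (Fin n)}
    (h : ∀ i, 1 ≤ i → i ≤ n → permVal n w i = permVal n w' i) : w = w' := by
  apply Equiv.ext; intro x
  have hx := x.isLt
  have h2 := h ((x : ℕ) + 1) (by omega) (by omega)
  rw [permVal_eq n w _ (by omega) (by omega), permVal_eq n w' _ (by omega) (by omega)] at h2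
  have h5 := Nat.add_right_cancel h2
  exact Fin.ext h5

/-! ### Descent-run predicates -/

/-- `w` is strictly decreasing on the (1-based) positions `1,…,ℓ`. -/
def DecPre (n : ℕ) (w : Equiv.Perm (Fin n)) (ℓ : ℕ) : Prop :=
  ∀ i ∈ Finset.Ico 1 ℓ, permVal n w (i + 1) < permVal n w i

instance (n : ℕ) (w : Equiv.Perm (Fin n)) : DecidablePred (DecPre n w) := fun ℓ =>
  decidable_of_iff (∀ i ∈ Finset.Ico 1 ℓ, permVal n w (i + 1) < permVal n w i) Iff.rfl

/-- No `k`-descent of `w` starts at a (1-based) position `≥ a`. -/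
def NDF (k n : ℕ) (w : Equiv.Perm (Fin n)) (a : ℕ) : Prop :=
  ∀ i, a ≤ i → i + k ≤ n + 1 →
    ∃ j, j < k - 1 ∧ ¬ permVal n w (i + j + 1) < permVal n w (i + j)

noncomputable instance (k n : ℕ) (w : Equiv.Perm (Fin n)) (a : ℕ) : Decidable (NDF k n w a) :=
  Classical.dec _

lemma NDF_mono {k n : ℕ} {w : Equiv.Perm (Fin n)} {a b : ℕ} (hab : a ≤ b) (h : NDF k n w a) :
    NDF k n w b := fun i hi hik => h i (le_trans hab hi) hik

lemma kDesc_empty_iff (k n : ℕ) (w : Equiv.Perm (Fin n)) :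
    kDescentSet k n w = ∅ ↔ NDF k n w 1 := by
  rw [kDescentSet, Finset.filter_eq_empty_iff]
  constructor
  · intro h i h1 h2
    have h3 := h (Finset.mem_Icc.mpr ⟨h1, by omega⟩)
    push_neg at h3
    obtain ⟨j, hj, hle⟩ := h3
    exact ⟨j, hj, not_lt.mpr hle⟩
  · intro h i hi hcon
    rw [Finset.mem_Icc] at hi
    obtain ⟨j, hj, hnd⟩ := h i hi.1 (by omega)
    exact hnd (hcon j hj)

/-! ### The initial run length -/

/-- Length of the maximal strictly decreasing initial run of `w`. -/
def runLen (n : ℕ) (w : Equiv.Perm (Fin n)) : ℕ := Nat.findGreatest (DecPre n w) n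

lemma decPre_one (n : ℕ) (w : Equiv.Perm (Fin n)) : DecPre n w 1 := by
  intro i hi
  rw [Finset.mem_Ico] at hi
  omega

lemma runLen_le (n : ℕ) (w : Equiv.Perm (Fin n)) : runLen n w ≤ n :=
  Nat.findGreatest_le n

lemma one_le_runLen (n : ℕ) (w : Equiv.Perm (Fin n)) (hn : 1 ≤ n) : 1 ≤ runLen n w :=
  Nat.le_findGreatest hn (decPre_one n w)

lemma decPre_runLen (n : ℕ) (w : Equiv.Perm (Fin n)) : DecPre n w (runLen n w) := by
  rcases Nat.eq_zero_or_pos n with h | h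
  · have h2 : runLen n w = 0 := by
      have := runLen_le n w; omega
    rw [h2]
    intro i hi; rw [Finset.mem_Ico] at hi; omega
  · exact Nat.findGreatest_spec h (decPre_one n w)

lemma decPre_anti {n : ℕ} {w : Equiv.Perm (Fin n)} {a b : ℕ} (hab : a ≤ b) (h : DecPre n w b) :
    DecPre n w a := by
  intro i hi
  rw [Finset.mem_Ico] at hi
  exact h i (Finset.mem_Ico.mpr ⟨hi.1, by omega⟩)

lemma le_runLen_of_decPre {n : ℕ} {w : Equiv.Perm (Fin n)} {ℓ : ℕ} (hn : ℓ ≤ n)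
    (h : DecPre n w ℓ) : ℓ ≤ runLen n w :=
  Nat.le_findGreatest hn h

lemma not_desc_at_runLen {n : ℕ} {w : Equiv.Perm (Fin n)} (h : runLen n w < n) :
    ¬ permVal n w (runLen n w + 1) < permVal n w (runLen n w) := by
  intro hlt
  have hng : ¬ DecPre n w (runLen n w + 1) :=
    Nat.findGreatest_is_greatest (Nat.lt_succ_self (runLen n w)) (by omega)
  apply hng
  intro i hi
  rw [Finset.mem_Ico] at hi
  rcases Nat.lt_or_ge i (runLen n w) with h2 | h2
  · exact decPre_runLen n w i (Finset.mem_Ico.mpr ⟨hi.1, h2⟩)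
  · have : i = runLen n w := by omega
    rw [this]
    exact hlt

lemma ndf_iff {k n : ℕ} {w : Equiv.Perm (Fin n)} {a : ℕ} (hk : 2 ≤ k) (ha : 1 ≤ a)
    (har : a ≤ runLen n w + 1) :
    NDF k n w a ↔ (runLen n w ≤ a + k - 2 ∧ NDF k n w (runLen n w + 1)) := by
  have hrn := runLen_le n w
  constructor
  · intro h
    refine ⟨?_, NDF_mono har h⟩
    by_contra hr
    push_neg at hr
    obtain ⟨j, hj, hnd⟩ := h a le_rfl (by omega)
    exact hnd (decPre_runLen n w (a + j) (Finset.mem_Ico.mpr ⟨by omega, by omega⟩))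
  · rintro ⟨hr, h⟩ i hai hik
    by_cases hir : runLen n w < i
    · exact h i hir hik
    · push_neg at hir
      refine ⟨runLen n w - i, by omega, ?_⟩
      have e1 : i + (runLen n w - i) = runLen n w := by omega
      rw [e1]
      exact not_desc_at_runLen (by omega)

lemma runLen_le_first {n m : ℕ} {w : Equiv.Perm (Fin n)} (hm : permVal n w 1 = m) (hn : 1 ≤ n) :
    runLen n w ≤ m := by
  have key : ∀ i, i < runLen n w → permVal n w (i + 1) + i ≤ m := by
    intro i
    induction i with
    | zero =>
      intro _
      simp [hm]
    | succ i ih =>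
      intro hlt
      have h1 := ih (by omega)
      have h2 : permVal n w (i + 1 + 1) < permVal n w (i + 1) :=
        decPre_runLen n w (i + 1) (Finset.mem_Ico.mpr ⟨by omega, hlt⟩)
      omega
  have h1 : 1 ≤ runLen n w := one_le_runLen n w hn
  have h2 := key (runLen n w - 1) (by omega)
  have h3 : 1 ≤ permVal n w (runLen n w - 1 + 1) :=
    permVal_pos n w _ (by omega) (by have := runLen_le n w; omega)
  omega

lemma noKDesc_iff {k n : ℕ} (w : Equiv.Perm (Fin n)) (hk : 2 ≤ k) (hn : 1 ≤ n) :
    kDescentSet k n w = ∅ ↔ (runLen n w ≤ k - 1 ∧ NDF k n w (runLen n w + 1)) := by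
  rw [kDesc_empty_iff, ndf_iff hk le_rfl (by omega)]
  constructor <;> rintro ⟨h1, h2⟩ <;> exact ⟨by omega, h2⟩

lemma prefix_iff {k n ℓ : ℕ} (w : Equiv.Perm (Fin n)) (hk : 2 ≤ k) (hℓ : 1 ≤ ℓ) (hℓn : ℓ ≤ n) :
    (DecPre n w ℓ ∧ NDF k n w (ℓ + 1)) ↔
      (ℓ ≤ runLen n w ∧ runLen n w ≤ ℓ + k - 1 ∧ NDF k n w (runLen n w + 1)) := by
  constructor
  · rintro ⟨h1, h2⟩
    have hr : ℓ ≤ runLen n w := le_runLen_of_decPre hℓn h1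
    have h3 := (ndf_iff (a := ℓ + 1) hk (by omega) (by omega)).mp h2
    exact ⟨hr, by omega, h3.2⟩
  · rintro ⟨h1, h2, h3⟩
    exact ⟨decPre_anti h1 (decPre_runLen n w),
      (ndf_iff (a := ℓ + 1) hk (by omega) (by omega)).mpr ⟨by omega, h3⟩⟩

lemma decPre_lt {n ℓ : ℕ} {w : Equiv.Perm (Fin n)} (h : DecPre n w ℓ) :
    ∀ i j, 1 ≤ i → i < j → j ≤ ℓ → permVal n w j < permVal n w i := by
  intro i j
  induction j with
  | zero => omega
  | succ j ih =>
    intro h1 h2 h3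
    have hstep : permVal n w (j + 1) < permVal n w j := by
      apply h j (Finset.mem_Ico.mpr ⟨by omega, by omega⟩)
    rcases Nat.lt_or_ge i j with h4 | h4
    · exact lt_trans hstep (ih h1 h4 (by omega))
    · have : i = j := by omega
      rw [this]
      exact hstep

/-! ### Window counting lemmas -/

lemma window_one {k r m : ℕ} (hk : 2 ≤ k) (h1 : 1 ≤ r) (hrm : r ≤ m) :
    (Finset.Icc 1 m).filter (fun ℓ => ℓ % k = 1 ∧ (ℓ ≤ r ∧ r ≤ ℓ + k - 1)) =
      {r - (r - 1) % k} := by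
  have hk0 : 0 < k := by omega
  have hs : (r - 1) % k < k := Nat.mod_lt _ hk0
  have hdm : k * ((r - 1) / k) + (r - 1) % k = r - 1 := Nat.div_add_mod _ _
  ext ℓ
  simp only [Finset.mem_filter, Finset.mem_Icc, Finset.mem_singleton]
  constructor
  · rintro ⟨⟨hℓ1, hℓm⟩, hmod, hler, hrle⟩
    have hd2 := Nat.div_add_mod ℓ k
    obtain ⟨c, hc⟩ : ∃ c, c = k * (ℓ / k) := ⟨_, rfl⟩
    rw [← hc] at hd2
    have h3 : (r - 1) % k = (r - ℓ) % k := by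
      conv_lhs => rw [show r - 1 = c + (r - ℓ) by omega]
      rw [hc, Nat.mul_add_mod]
    have h4 : (r - ℓ) % k = r - ℓ := Nat.mod_eq_of_lt (by omega)
    omega
  · intro hEq
    obtain ⟨c, hc⟩ : ∃ c, c = k * ((r - 1) / k) := ⟨_, rfl⟩
    rw [← hc] at hdm
    have h5 : (c + 1) % k = 1 := by
      rw [hc, Nat.mul_add_mod]
      exact Nat.mod_eq_of_lt (by omega)
    subst hEq
    have h2 : r - (r - 1) % k = c + 1 := by omega
    rw [h2]
    exact ⟨⟨by omega, by omega⟩, h5, by omega, by omega⟩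

lemma window_zero_lt {k r m : ℕ} (hk : 2 ≤ k) (hrk : r ≤ k - 1) :
    (Finset.Icc k m).filter (fun ℓ => ℓ % k = 0 ∧ (ℓ ≤ r ∧ r ≤ ℓ + k - 1)) = ∅ := by
  ext ℓ
  simp only [Finset.mem_filter, Finset.mem_Icc, Finset.notMem_empty, iff_false]
  rintro ⟨⟨ha, hb⟩, _, hc, _⟩
  omega

lemma window_zero_ge {k r m : ℕ} (hk : 2 ≤ k) (hrk : k ≤ r) (hrm : r ≤ m) :
    (Finset.Icc k m).filter (fun ℓ => ℓ % k = 0 ∧ (ℓ ≤ r ∧ r ≤ ℓ + k - 1)) =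
      {r - r % k} := by
  have hk0 : 0 < k := by omega
  have hs : r % k < k := Nat.mod_lt _ hk0
  have hdm : k * (r / k) + r % k = r := Nat.div_add_mod _ _
  ext ℓ
  simp only [Finset.mem_filter, Finset.mem_Icc, Finset.mem_singleton]
  constructor
  · rintro ⟨⟨hℓk, hℓm⟩, hmod, hler, hrle⟩
    have hd2 := Nat.div_add_mod ℓ k
    obtain ⟨c, hc⟩ : ∃ c, c = k * (ℓ / k) := ⟨_, rfl⟩
    rw [← hc] at hd2
    have h3 : r % k = (r - ℓ) % k := by
      conv_lhs => rw [show r = c + (r - ℓ) by omega]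
      rw [hc, Nat.mul_add_mod]
    have h4 : (r - ℓ) % k = r - ℓ := Nat.mod_eq_of_lt (by omega)
    omega
  · intro hEq
    obtain ⟨c, hc⟩ : ∃ c, c = k * (r / k) := ⟨_, rfl⟩
    rw [← hc] at hdm
    have h6 : c % k = 0 := by rw [hc]; exact Nat.mul_mod_right _ _
    have h5 : k ≤ c := by
      rw [hc]
      calc k = k * 1 := (mul_one k).symm
        _ ≤ k * (r / k) := Nat.mul_le_mul_left k ((Nat.one_le_div_iff hk0).mpr hrk)
    subst hEq
    have h2 : r - r % k = c := by omega
    rw [h2]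
    exact ⟨⟨h5, by omega⟩, h6, by omega, by omega⟩

/-! ### Enumeration of a finite set of naturals in increasing order -/

/-- The `i`-th smallest element of `A` (0-based), or `0` if out of range. -/
def enum (A : Finset ℕ) (i : ℕ) : ℕ := (A.sort (· ≤ ·)).getD i 0

lemma enum_eq {A : Finset ℕ} {c : ℕ} (hc : A.card = c) {i : ℕ} (hi : i < c) :
    enum A i = A.orderEmbOfFin hc ⟨i, hi⟩ := by
  simp only [enum, Finset.orderEmbOfFin_apply]
  exact List.getD_eq_getElem _ _ (by rw [Finset.length_sort, hc]; exact hi)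

lemma enum_eq_fin {A : Finset ℕ} {c : ℕ} (hc : A.card = c) (i : Fin c) :
    enum A (i : ℕ) = A.orderEmbOfFin hc i :=
  enum_eq hc i.isLt

lemma enum_mem {A : Finset ℕ} {c : ℕ} (hc : A.card = c) {i : ℕ} (hi : i < c) :
    enum A i ∈ A := by
  rw [enum_eq hc hi]
  exact Finset.orderEmbOfFin_mem A hc _

lemma enum_lt {A : Finset ℕ} {c : ℕ} (hc : A.card = c) {i j : ℕ} (hij : i < j) (hj : j < c) :
    enum A i < enum A j := by
  rw [enum_eq hc (lt_trans hij hj), enum_eq hc hj]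
  exact (A.orderEmbOfFin hc).strictMono (Fin.mk_lt_mk.mpr hij)

lemma enum_lt_iff {A : Finset ℕ} {c : ℕ} (hc : A.card = c) {i j : ℕ} (hi : i < c) (hj : j < c) :
    enum A i < enum A j ↔ i < j := by
  constructor
  · intro h
    by_contra h2
    push_neg at h2
    rcases Nat.lt_or_ge j i with h3 | h3
    · exact absurd (enum_lt hc h3 hi) (by omega)
    · have : i = j := by omega
      rw [this] at h; omega
  · intro h
    exact enum_lt hc h hj

lemma enum_inj {A : Finset ℕ} {c : ℕ} (hc : A.card = c) {i j : ℕ} (hi : i < c) (hj : j < c)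
    (h : enum A i = enum A j) : i = j := by
  rcases lt_trichotomy i j with h2 | h2 | h2
  · exact absurd (enum_lt hc h2 hj) (by omega)
  · exact h2
  · exact absurd (enum_lt hc h2 hi) (by omega)

lemma enum_surj {A : Finset ℕ} {c : ℕ} (hc : A.card = c) {a : ℕ} (ha : a ∈ A) :
    ∃ i, i < c ∧ enum A i = a := by
  have h2 : a ∈ Set.range (A.orderEmbOfFin hc) := by
    rw [Finset.range_orderEmbOfFin]; exact ha
  obtain ⟨i, hi⟩ := h2
  exact ⟨(i : ℕ), i.isLt, by rw [enum_eq_fin hc i]; exact hi⟩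

lemma enum_last {A : Finset ℕ} {c : ℕ} (hc : A.card = c) (h0 : 0 < c)
    (hne : A.Nonempty) : enum A (c - 1) = A.max' hne := by
  rw [enum_eq hc (by omega)]
  exact Finset.orderEmbOfFin_last hc h0

lemma orderIso_enum {T : Finset ℕ} {c : ℕ} (hc : T.card = c) (y : {x // x ∈ T}) :
    enum T ((T.orderIsoOfFin hc).symm y : ℕ) = (y : ℕ) := by
  rw [enum_eq_fin hc, ← Finset.coe_orderIsoOfFin_apply, OrderIso.apply_symm_apply]

/-! ### The building-block data -/

/-- The hypotheses needed to build a permutation from prefix-value set `S` and suffix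
permutation. -/
def Cond (n ℓ m : ℕ) (S : Finset ℕ) : Prop :=
  1 ≤ ℓ ∧ ℓ ≤ m ∧ m ≤ n ∧ S ⊆ Finset.Icc 1 (m - 1) ∧ S.card = ℓ - 1

lemma Cond.notMem {n ℓ m : ℕ} {S : Finset ℕ} (hC : Cond n ℓ m S) : m ∉ S := by
  intro h
  have h2 := hC.2.2.2.1 h
  rw [Finset.mem_Icc] at h2
  have := hC.1
  have := hC.2.1
  omega

lemma Cond.Pc {n ℓ m : ℕ} {S : Finset ℕ} (hC : Cond n ℓ m S) : (insert m S).card = ℓ := by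
  rw [Finset.card_insert_of_notMem hC.notMem, hC.2.2.2.2]
  have := hC.1; have := hC.2.1
  omega

lemma Cond.Psub {n ℓ m : ℕ} {S : Finset ℕ} (hC : Cond n ℓ m S) :
    insert m S ⊆ Finset.Icc 1 n := by
  apply Finset.insert_subset
  · rw [Finset.mem_Icc]
    have := hC.1; have := hC.2.1; have := hC.2.2.1
    omega
  · intro s hs
    have h2 := hC.2.2.2.1 hs
    rw [Finset.mem_Icc] at h2 ⊢
    have := hC.2.2.1
    omega

lemma Cond.Tc {n ℓ m : ℕ} {S : Finset ℕ} (hC : Cond n ℓ m S) :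
    (Finset.Icc 1 n \ insert m S).card = n - ℓ := by
  rw [Finset.card_sdiff_of_subset hC.Psub, hC.Pc, Nat.card_Icc]
  omega

lemma Cond.enumTop {n ℓ m : ℕ} {S : Finset ℕ} (hC : Cond n ℓ m S) :
    enum (insert m S) (ℓ - 1) = m := by
  have h1 := hC.1
  rw [enum_last hC.Pc (by omega) ⟨m, Finset.mem_insert_self m S⟩]
  apply le_antisymm
  · apply Finset.max'_le
    intro y hy
    rcases Finset.mem_insert.mp hy with h | h
    · omega
    · have h2 := hC.2.2.2.1 h
      rw [Finset.mem_Icc] at h2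
      omega
  · exact Finset.le_max' _ m (Finset.mem_insert_self m S)

/-- The underlying (1-based-value) function of the built permutation. -/
def bfunN (n ℓ m : ℕ) (S : Finset ℕ) (v : Equiv.Perm (Fin (n - ℓ))) (x : ℕ) : ℕ :=
  if h1 : x < ℓ then enum (insert m S) (ℓ - 1 - x)
  else if h2 : x < n then
    enum (Finset.Icc 1 n \ insert m S) (v ⟨x - ℓ, by omega⟩) else 0

lemma bfunN_lt {n ℓ m : ℕ} {S : Finset ℕ} (v : Equiv.Perm (Fin (n - ℓ))) {x : ℕ}
    (hx : x < ℓ) : bfunN n ℓ m S v x = enum (insert m S) (ℓ - 1 - x) :=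
  dif_pos hx

lemma bfunN_ge {n ℓ m : ℕ} {S : Finset ℕ} (v : Equiv.Perm (Fin (n - ℓ))) {x : ℕ}
    (hx : ¬ x < ℓ) (hxn : x < n) :
    bfunN n ℓ m S v x =
      enum (Finset.Icc 1 n \ insert m S) (permVal (n - ℓ) v (x - ℓ + 1) - 1) := by
  rw [bfunN, dif_neg hx, dif_pos hxn,
    permVal_eq (n - ℓ) v (x - ℓ + 1) (by omega) (by omega)]
  simp only [Nat.add_sub_cancel]

lemma bfunN_mem {n ℓ m : ℕ} {S : Finset ℕ} (hC : Cond n ℓ m S) (v : Equiv.Perm (Fin (n - ℓ)))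
    {x : ℕ} (hx : x < n) : bfunN n ℓ m S v x ∈ Finset.Icc 1 n := by
  by_cases h1 : x < ℓ
  · rw [bfunN_lt v h1]
    exact hC.Psub (enum_mem hC.Pc (by have := hC.1; omega))
  · rw [bfunN_ge v h1 hx]
    have hp1 := permVal_pos (n - ℓ) v (x - ℓ + 1) (by omega) (by omega)
    have hp2 := permVal_le (n - ℓ) v (x - ℓ + 1) (by omega) (by omega)
    have h2 := enum_mem hC.Tc (show permVal (n - ℓ) v (x - ℓ + 1) - 1 < n - ℓ by omega)
    exact (Finset.mem_sdiff.mp h2).1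

lemma bfunN_inj {n ℓ m : ℕ} {S : Finset ℕ} (hC : Cond n ℓ m S) (v : Equiv.Perm (Fin (n - ℓ)))
    {x y : ℕ} (hx : x < n) (hy : y < n) (he : bfunN n ℓ m S v x = bfunN n ℓ m S v y) :
    x = y := by
  have hℓn : ℓ ≤ n := le_trans hC.2.1 hC.2.2.1
  by_cases h1 : x < ℓ <;> by_cases h2 : y < ℓ
  · rw [bfunN_lt v h1, bfunN_lt v h2] at he
    have := enum_inj hC.Pc (show ℓ - 1 - x < ℓ by omega) (show ℓ - 1 - y < ℓ by omega) he
    omega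
  · rw [bfunN_lt v h1, bfunN_ge v h2 hy] at he
    have ha := enum_mem hC.Pc (show ℓ - 1 - x < ℓ by omega)
    have hp1 := permVal_pos (n - ℓ) v (y - ℓ + 1) (by omega) (by omega)
    have hp2 := permVal_le (n - ℓ) v (y - ℓ + 1) (by omega) (by omega)
    have hb := enum_mem hC.Tc (show permVal (n - ℓ) v (y - ℓ + 1) - 1 < n - ℓ by omega)
    rw [← he] at hb
    exact absurd ha (Finset.mem_sdiff.mp hb).2
  · rw [bfunN_ge v h1 hx, bfunN_lt v h2] at he
    have ha := enum_mem hC.Pc (show ℓ - 1 - y < ℓ by omega)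
    have hp1 := permVal_pos (n - ℓ) v (x - ℓ + 1) (by omega) (by omega)
    have hp2 := permVal_le (n - ℓ) v (x - ℓ + 1) (by omega) (by omega)
    have hb := enum_mem hC.Tc (show permVal (n - ℓ) v (x - ℓ + 1) - 1 < n - ℓ by omega)
    rw [he] at hb
    exact absurd ha (Finset.mem_sdiff.mp hb).2
  · rw [bfunN_ge v h1 hx, bfunN_ge v h2 hy] at he
    have hpx1 := permVal_pos (n - ℓ) v (x - ℓ + 1) (by omega) (by omega)
    have hpx2 := permVal_le (n - ℓ) v (x - ℓ + 1) (by omega) (by omega)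
    have hpy1 := permVal_pos (n - ℓ) v (y - ℓ + 1) (by omega) (by omega)
    have hpy2 := permVal_le (n - ℓ) v (y - ℓ + 1) (by omega) (by omega)
    have h3 := enum_inj hC.Tc (show permVal (n - ℓ) v (x - ℓ + 1) - 1 < n - ℓ by omega)
      (show permVal (n - ℓ) v (y - ℓ + 1) - 1 < n - ℓ by omega) he
    have h4 : permVal (n - ℓ) v (x - ℓ + 1) = permVal (n - ℓ) v (y - ℓ + 1) := by omega
    have h5 := permVal_injOn (n - ℓ) v (i := x - ℓ + 1) (j := y - ℓ + 1)
      (by omega) (by omega) (by omega) (by omega) h4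
    omega

instance (n ℓ m : ℕ) (S : Finset ℕ) : Decidable (Cond n ℓ m S) := by
  unfold Cond; infer_instance

/-- Build a permutation of `Fin n` from a prefix value set and a suffix permutation. -/
noncomputable def buildPerm (n ℓ m : ℕ) (S : Finset ℕ) (v : Equiv.Perm (Fin (n - ℓ))) :
    Equiv.Perm (Fin n) :=
  if hC : Cond n ℓ m S then
    Equiv.ofBijective
      (fun x : Fin n =>
        (⟨bfunN n ℓ m S v x - 1, by
          have := bfunN_mem hC v x.isLt
          rw [Finset.mem_Icc] at this
          omega⟩ : Fin n))
      (by
        apply Finite.injective_iff_bijective.mp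
        intro x y hxy
        have h1 := bfunN_mem hC v x.isLt
        have h2 := bfunN_mem hC v y.isLt
        rw [Finset.mem_Icc] at h1 h2
        have h3 : bfunN n ℓ m S v x - 1 = bfunN n ℓ m S v y - 1 := congrArg Fin.val hxy
        exact Fin.ext (bfunN_inj hC v x.isLt y.isLt (by omega)))
  else 1

lemma permVal_buildPerm {n ℓ m : ℕ} {S : Finset ℕ} (hC : Cond n ℓ m S)
    (v : Equiv.Perm (Fin (n - ℓ))) (i : ℕ) (h1 : 1 ≤ i) (h2 : i ≤ n) :
    permVal n (buildPerm n ℓ m S v) i = bfunN n ℓ m S v (i - 1) := by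
  rw [permVal_eq n _ i h1 h2]
  unfold buildPerm
  rw [dif_pos hC]
  show bfunN n ℓ m S v (i - 1) - 1 + 1 = bfunN n ℓ m S v (i - 1)
  have := bfunN_mem hC v (show i - 1 < n by omega)
  rw [Finset.mem_Icc] at this
  omega

lemma permVal_buildPerm_lt {n ℓ m : ℕ} {S : Finset ℕ} (hC : Cond n ℓ m S)
    (v : Equiv.Perm (Fin (n - ℓ))) (i : ℕ) (h1 : 1 ≤ i) (h2 : i ≤ ℓ) :
    permVal n (buildPerm n ℓ m S v) i = enum (insert m S) (ℓ - i) := by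
  have hℓn : ℓ ≤ n := le_trans hC.2.1 hC.2.2.1
  rw [permVal_buildPerm hC v i h1 (by omega), bfunN_lt v (show i - 1 < ℓ by omega)]
  congr 1
  omega

lemma buildPerm_hbr {n ℓ m : ℕ} {S : Finset ℕ} (hC : Cond n ℓ m S)
    (v : Equiv.Perm (Fin (n - ℓ))) (i : ℕ) (h1 : ℓ + 1 ≤ i) (h2 : i ≤ n) :
    permVal n (buildPerm n ℓ m S v) i =
      enum (Finset.Icc 1 n \ insert m S) (permVal (n - ℓ) v (i - ℓ) - 1) := by
  rw [permVal_buildPerm hC v i (by omega) h2, bfunN_ge v (show ¬ i - 1 < ℓ by omega) (by omega)]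
  have e : i - 1 - ℓ + 1 = i - ℓ := by omega
  rw [e]

/-! ### Transfer of the no-descent condition between `w` and the suffix permutation -/

lemma NDF_shift {k n ℓ : ℕ} (w : Equiv.Perm (Fin n)) (v : Equiv.Perm (Fin (n - ℓ)))
    (T : Finset ℕ) (hTc : T.card = n - ℓ) (hℓn : ℓ ≤ n)
    (hbr : ∀ i, ℓ + 1 ≤ i → i ≤ n →
      permVal n w i = enum T (permVal (n - ℓ) v (i - ℓ) - 1)) :
    NDF k n w (ℓ + 1) ↔ NDF k (n - ℓ) v 1 := by
  have key : ∀ a b, ℓ + 1 ≤ a → a ≤ n → ℓ + 1 ≤ b → b ≤ n →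
      (permVal n w a < permVal n w b ↔
        permVal (n - ℓ) v (a - ℓ) < permVal (n - ℓ) v (b - ℓ)) := by
    intro a b ha1 ha2 hb1 hb2
    rw [hbr a ha1 ha2, hbr b hb1 hb2]
    have pa1 := permVal_pos (n - ℓ) v (a - ℓ) (by omega) (by omega)
    have pa2 := permVal_le (n - ℓ) v (a - ℓ) (by omega) (by omega)
    have pb1 := permVal_pos (n - ℓ) v (b - ℓ) (by omega) (by omega)
    have pb2 := permVal_le (n - ℓ) v (b - ℓ) (by omega) (by omega)
    rw [enum_lt_iff hTc (by omega) (by omega)]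
    omega
  constructor
  · intro h i hi1 hik
    obtain ⟨j, hj, hnd⟩ := h (i + ℓ) (by omega) (by omega)
    refine ⟨j, hj, fun hcon => hnd ?_⟩
    have e := key (i + ℓ + j + 1) (i + ℓ + j) (by omega) (by omega) (by omega) (by omega)
    rw [show i + ℓ + j + 1 - ℓ = i + j + 1 by omega, show i + ℓ + j - ℓ = i + j by omega] at e
    exact e.mpr hcon
  · intro h i hi1 hik
    obtain ⟨j, hj, hnd⟩ := h (i - ℓ) (by omega) (by omega)
    refine ⟨j, hj, fun hcon => hnd ?_⟩
    have e := key (i + j + 1) (i + j) (by omega) (by omega) (by omega) (by omega)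
    rw [show i + j + 1 - ℓ = i - ℓ + j + 1 by omega, show i + j - ℓ = i - ℓ + j by omega] at e
    exact e.mp hcon

/-! ### Properties of `buildPerm` -/

lemma buildPerm_first {n ℓ m : ℕ} {S : Finset ℕ} (hC : Cond n ℓ m S)
    (v : Equiv.Perm (Fin (n - ℓ))) : permVal n (buildPerm n ℓ m S v) 1 = m := by
  rw [permVal_buildPerm_lt hC v 1 le_rfl hC.1]
  exact hC.enumTop

lemma buildPerm_decPre {n ℓ m : ℕ} {S : Finset ℕ} (hC : Cond n ℓ m S)
    (v : Equiv.Perm (Fin (n - ℓ))) : DecPre n (buildPerm n ℓ m S v) ℓ := by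
  intro i hi
  rw [Finset.mem_Ico] at hi
  rw [permVal_buildPerm_lt hC v i hi.1 (by omega),
    permVal_buildPerm_lt hC v (i + 1) (by omega) (by omega)]
  exact enum_lt hC.Pc (by omega) (by omega)

lemma buildPerm_ndf {n ℓ m k : ℕ} {S : Finset ℕ} (hC : Cond n ℓ m S)
    (v : Equiv.Perm (Fin (n - ℓ))) (hv : NDF k (n - ℓ) v 1) :
    NDF k n (buildPerm n ℓ m S v) (ℓ + 1) := by
  have hℓn : ℓ ≤ n := le_trans hC.2.1 hC.2.2.1
  exact (NDF_shift _ v _ hC.Tc hℓn (fun i h1 h2 => buildPerm_hbr hC v i h1 h2)).mpr hv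

lemma buildPerm_image {n ℓ m : ℕ} {S : Finset ℕ} (hC : Cond n ℓ m S)
    (v : Equiv.Perm (Fin (n - ℓ))) :
    (Finset.Icc 2 ℓ).image (permVal n (buildPerm n ℓ m S v)) = S := by
  have h1 := hC.1
  ext s
  simp only [Finset.mem_image, Finset.mem_Icc]
  constructor
  · rintro ⟨i, ⟨hi2, hiℓ⟩, rfl⟩
    rw [permVal_buildPerm_lt hC v i (by omega) hiℓ]
    have hmem := enum_mem hC.Pc (show ℓ - i < ℓ by omega)
    have hlt : enum (insert m S) (ℓ - i) < enum (insert m S) (ℓ - 1) :=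
      enum_lt hC.Pc (by omega) (by omega)
    rw [hC.enumTop] at hlt
    rcases Finset.mem_insert.mp hmem with h | h
    · omega
    · exact h
  · intro hs
    obtain ⟨t, ht, hts⟩ := enum_surj hC.Pc (Finset.mem_insert_of_mem hs)
    have htne : t ≠ ℓ - 1 := by
      rintro rfl
      rw [hC.enumTop] at hts
      exact hC.notMem (hts ▸ hs)
    refine ⟨ℓ - t, ⟨by omega, by omega⟩, ?_⟩
    rw [permVal_buildPerm_lt hC v (ℓ - t) (by omega) (by omega),
      show ℓ - (ℓ - t) = t by omega]
    exact hts

/-! ### Recovering the suffix permutation from `w` -/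

noncomputable def recoverV (n ℓ : ℕ) (T : Finset ℕ) (w : Equiv.Perm (Fin n))
    (hTc : T.card = n - ℓ)
    (hmem : ∀ t : Fin (n - ℓ), permVal n w (ℓ + (t : ℕ) + 1) ∈ T) :
    Equiv.Perm (Fin (n - ℓ)) :=
  Equiv.ofBijective
    (fun t => (T.orderIsoOfFin hTc).symm ⟨permVal n w (ℓ + (t : ℕ) + 1), hmem t⟩)
    (by
      apply Finite.injective_iff_bijective.mp
      intro a b hab
      have h2 : (⟨permVal n w (ℓ + (a : ℕ) + 1), hmem a⟩ : {x // x ∈ T}) =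
          ⟨permVal n w (ℓ + (b : ℕ) + 1), hmem b⟩ :=
        (T.orderIsoOfFin hTc).symm.injective hab
      have h3 : permVal n w (ℓ + (a : ℕ) + 1) = permVal n w (ℓ + (b : ℕ) + 1) :=
        congrArg Subtype.val h2
      have ha := a.isLt
      have hb := b.isLt
      have h4 := permVal_injOn n w (i := ℓ + (a : ℕ) + 1) (j := ℓ + (b : ℕ) + 1)
        (by omega) (by omega) (by omega) (by omega) h3
      exact Fin.ext (by omega))

lemma recoverV_hbr {n ℓ : ℕ} (T : Finset ℕ) (w : Equiv.Perm (Fin n))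
    (hTc : T.card = n - ℓ)
    (hmem : ∀ t : Fin (n - ℓ), permVal n w (ℓ + (t : ℕ) + 1) ∈ T)
    (i : ℕ) (h1 : ℓ + 1 ≤ i) (h2 : i ≤ n) :
    permVal n w i =
      enum T (permVal (n - ℓ) (recoverV n ℓ T w hTc hmem) (i - ℓ) - 1) := by
  rw [permVal_eq (n - ℓ) (recoverV n ℓ T w hTc hmem) (i - ℓ) (by omega) (by omega)]
  simp only [Nat.add_sub_cancel]
  unfold recoverV
  rw [Equiv.ofBijective_apply, orderIso_enum hTc]
  show permVal n w i = permVal n w (ℓ + (i - ℓ - 1) + 1)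
  congr 1
  omega

/-! ### The key counting lemma -/

lemma cardA (k n m ℓ : ℕ) (hℓ1 : 1 ≤ ℓ) (hℓm : ℓ ≤ m) (hmn : m ≤ n) :
    (Finset.univ.filter (fun w : Equiv.Perm (Fin n) =>
        permVal n w 1 = m ∧ DecPre n w ℓ ∧ NDF k n w (ℓ + 1))).card =
      Nat.choose (m - 1) (ℓ - 1) * fK k (n - ℓ) := by
  classical
  have hℓn : ℓ ≤ n := le_trans hℓm hmn
  have h1 : ((Finset.Icc 1 (m - 1)).powersetCard (ℓ - 1) ×ˢ
      Finset.univ.filter (fun v : Equiv.Perm (Fin (n - ℓ)) =>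
        kDescentSet k (n - ℓ) v = ∅)).card = Nat.choose (m - 1) (ℓ - 1) * fK k (n - ℓ) := by
    rw [Finset.card_product, Finset.card_powersetCard, Nat.card_Icc]
    have e : m - 1 + 1 - 1 = m - 1 := by omega
    rw [e]
    congr 1
  rw [← h1]
  refine (Finset.card_bij
    (fun (Sv : Finset ℕ × Equiv.Perm (Fin (n - ℓ))) _ => buildPerm n ℓ m Sv.1 Sv.2)
    ?_ ?_ ?_).symm
  · -- maps into the filter
    rintro ⟨S, v⟩ hSv
    rw [Finset.mem_product] at hSv
    obtain ⟨hS, hv⟩ := hSv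
    rw [Finset.mem_powersetCard] at hS
    have hC : Cond n ℓ m S := ⟨hℓ1, hℓm, hmn, hS.1, hS.2⟩
    rw [Finset.mem_filter] at hv
    refine Finset.mem_filter.mpr ⟨Finset.mem_univ _, buildPerm_first hC v,
      buildPerm_decPre hC v, buildPerm_ndf hC v ?_⟩
    exact (kDesc_empty_iff k (n - ℓ) v).mp hv.2
  · -- injective
    rintro ⟨S, v⟩ hSv ⟨S', v'⟩ hSv' heq
    rw [Finset.mem_product, Finset.mem_powersetCard] at hSv hSv'
    have hC : Cond n ℓ m S := ⟨hℓ1, hℓm, hmn, hSv.1.1, hSv.1.2⟩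
    have hC' : Cond n ℓ m S' := ⟨hℓ1, hℓm, hmn, hSv'.1.1, hSv'.1.2⟩
    have heq' : buildPerm n ℓ m S v = buildPerm n ℓ m S' v' := heq
    have hSeq : S = S' := by
      rw [← buildPerm_image hC v, ← buildPerm_image hC' v', heq']
    subst hSeq
    have hveq : v = v' := by
      apply perm_ext
      intro q hq1 hq2
      have e1 := buildPerm_hbr hC v (q + ℓ) (by omega) (by omega)
      have e2 := buildPerm_hbr hC' v' (q + ℓ) (by omega) (by omega)
      rw [heq'] at e1
      rw [show q + ℓ - ℓ = q by omega] at e1 e2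
      have e3 : enum (Finset.Icc 1 n \ insert m S) (permVal (n - ℓ) v q - 1) =
          enum (Finset.Icc 1 n \ insert m S) (permVal (n - ℓ) v' q - 1) := by
        rw [← e1, ← e2]
      have pv1 := permVal_pos (n - ℓ) v q hq1 hq2
      have pv2 := permVal_le (n - ℓ) v q hq1 hq2
      have pv1' := permVal_pos (n - ℓ) v' q hq1 hq2
      have pv2' := permVal_le (n - ℓ) v' q hq1 hq2
      have h4 := enum_inj hC.Tc (show permVal (n - ℓ) v q - 1 < n - ℓ by omega)
        (show permVal (n - ℓ) v' q - 1 < n - ℓ by omega) e3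
      omega
    rw [hveq]
  · -- surjective
    intro w hw
    rw [Finset.mem_filter] at hw
    obtain ⟨-, hw1, hw2, hw3⟩ := hw
    have hchain := decPre_lt hw2
    set S : Finset ℕ := (Finset.Icc 2 ℓ).image (permVal n w) with hSdef
    have hSsub : S ⊆ Finset.Icc 1 (m - 1) := by
      intro s hs
      rw [hSdef, Finset.mem_image] at hs
      obtain ⟨i, hi, rfl⟩ := hs
      rw [Finset.mem_Icc] at hi
      have hlt : permVal n w i < permVal n w 1 := hchain 1 i (by omega) (by omega) (by omega)
      have hpos := permVal_pos n w i (by omega) (by omega)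
      rw [Finset.mem_Icc]
      omega
    have hinj : Set.InjOn (permVal n w) (Finset.Icc 2 ℓ) := by
      intro a ha b hb hab
      rw [Finset.coe_Icc, Set.mem_Icc] at ha hb
      rcases lt_trichotomy a b with h | h | h
      · exact absurd (hchain a b (by omega) h (by omega)) (by omega)
      · exact h
      · exact absurd (hchain b a (by omega) h (by omega)) (by omega)
    have hScard : S.card = ℓ - 1 := by
      rw [hSdef, Finset.card_image_of_injOn hinj, Nat.card_Icc]
      omega
    have hC : Cond n ℓ m S := ⟨hℓ1, hℓm, hmn, hSsub, hScard⟩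
    have hPimg : insert m S = (Finset.Icc 1 ℓ).image (permVal n w) := by
      rw [hSdef, show Finset.Icc 1 ℓ = insert 1 (Finset.Icc 2 ℓ) by
        ext a; simp only [Finset.mem_insert, Finset.mem_Icc]; omega,
        Finset.image_insert, hw1]
    have hmemT : ∀ t : Fin (n - ℓ),
        permVal n w (ℓ + (t : ℕ) + 1) ∈ Finset.Icc 1 n \ insert m S := by
      intro t
      have ht := t.isLt
      rw [Finset.mem_sdiff]
      constructor
      · rw [Finset.mem_Icc]
        have := permVal_pos n w (ℓ + (t : ℕ) + 1) (by omega) (by omega)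
        have := permVal_le n w (ℓ + (t : ℕ) + 1) (by omega) (by omega)
        omega
      · intro hcon
        rw [hPimg, Finset.mem_image] at hcon
        obtain ⟨i, hi, hie⟩ := hcon
        rw [Finset.mem_Icc] at hi
        have := permVal_injOn n w (i := i) (j := ℓ + (t : ℕ) + 1)
          (by omega) (by omega) (by omega) (by omega) hie
        omega
    set v := recoverV n ℓ (Finset.Icc 1 n \ insert m S) w hC.Tc hmemT with hvdef
    have hbr := recoverV_hbr (Finset.Icc 1 n \ insert m S) w hC.Tc hmemT
    refine ⟨⟨S, v⟩, ?_, ?_⟩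
    · rw [Finset.mem_product, Finset.mem_powersetCard]
      refine ⟨⟨hSsub, hScard⟩, Finset.mem_filter.mpr ⟨Finset.mem_univ _, ?_⟩⟩
      rw [kDesc_empty_iff]
      exact (NDF_shift w v _ hC.Tc hℓn hbr).mp hw3
    · -- buildPerm n ℓ m S v = w
      apply perm_ext
      intro i hi1 hi2
      by_cases hiℓ : i ≤ ℓ
      · rw [permVal_buildPerm_lt hC v i hi1 hiℓ]
        -- the decreasing enumeration of (insert m S)
        have hEP : (fun j : Fin ℓ => permVal n w (ℓ - (j : ℕ))) =
            (insert m S).orderEmbOfFin hC.Pc := by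
          apply Finset.orderEmbOfFin_unique
          · intro j
            have hj := j.isLt
            rw [hPimg, Finset.mem_image]
            exact ⟨ℓ - (j : ℕ), Finset.mem_Icc.mpr ⟨by omega, by omega⟩, rfl⟩
          · intro j j' hjj'
            have hj' := j'.isLt
            exact hchain (ℓ - (j' : ℕ)) (ℓ - (j : ℕ)) (by omega)
              (by have : (j : ℕ) < (j' : ℕ) := hjj'; omega) (by omega)
        rw [enum_eq hC.Pc (show ℓ - i < ℓ by omega), ← hEP]
        show permVal n w (ℓ - (ℓ - i)) = permVal n w i
        congr 1
        omega
      · rw [buildPerm_hbr hC v i (by omega) hi2, ← hbr i (by omega) hi2]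

/-! ### Decomposition of counts by initial run length -/

lemma fKm_card (k m n : ℕ) (hk : 2 ≤ k) (hn : 1 ≤ n) :
    fKm k m n = (Finset.univ.filter (fun w : Equiv.Perm (Fin n) =>
      (permVal n w 1 = m ∧ NDF k n w (runLen n w + 1)) ∧ runLen n w ≤ k - 1)).card := by
  classical
  rw [fKm, dIm]
  congr 1
  apply Finset.filter_congr
  intro w _
  rw [noKDesc_iff w hk hn]
  tauto

lemma cardA' (k n m ℓ : ℕ) (hk : 2 ≤ k) (hℓ1 : 1 ≤ ℓ) (hℓm : ℓ ≤ m) (hmn : m ≤ n) :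
    Nat.choose (m - 1) (ℓ - 1) * fK k (n - ℓ) =
      (Finset.univ.filter (fun w : Equiv.Perm (Fin n) =>
        (permVal n w 1 = m ∧ NDF k n w (runLen n w + 1)) ∧
          (ℓ ≤ runLen n w ∧ runLen n w ≤ ℓ + k - 1))).card := by
  classical
  rw [← cardA k n m ℓ hℓ1 hℓm hmn]
  congr 1
  apply Finset.filter_congr
  intro w _
  have h := prefix_iff (k := k) w hk hℓ1 (le_trans hℓm hmn)
  tauto

end KD

/-- Proposition: alternating-sum formula for `f_k(m,n)`.
For `k ≥ 3` and `1 ≤ m ≤ n`,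
`f_k(m,n) = Σ_{ℓ ≡ 1 (k), 1 ≤ ℓ ≤ m} C(m-1,ℓ-1)·f_k(n-ℓ)
          - Σ_{ℓ ≡ 0 (k), k ≤ ℓ ≤ m} C(m-1,ℓ-1)·f_k(n-ℓ)`. -/
theorem fKm_alternating_sum (k m n : ℕ) (hk : 3 ≤ k) (hm : 1 ≤ m) (hmn : m ≤ n) :
    (fKm k m n : ℤ) =
      (∑ ℓ ∈ (Finset.Icc 1 m).filter (fun ℓ => ℓ % k = 1),
          (Nat.choose (m - 1) (ℓ - 1) : ℤ) * (fK k (n - ℓ) : ℤ)) -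
      (∑ ℓ ∈ (Finset.Icc k m).filter (fun ℓ => ℓ % k = 0),
          (Nat.choose (m - 1) (ℓ - 1) : ℤ) * (fK k (n - ℓ) : ℤ)) := by
  classical
  have hk2 : 2 ≤ k := by omega
  have hn : 1 ≤ n := le_trans hm hmn
  set F1 := (Finset.Icc 1 m).filter (fun ℓ => ℓ % k = 1) with hF1
  set F0 := (Finset.Icc k m).filter (fun ℓ => ℓ % k = 0) with hF0
  have key : fKm k m n + ∑ ℓ ∈ F0, Nat.choose (m - 1) (ℓ - 1) * fK k (n - ℓ) =
      ∑ ℓ ∈ F1, Nat.choose (m - 1) (ℓ - 1) * fK k (n - ℓ) := by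
    have e0 : ∑ ℓ ∈ F0, Nat.choose (m - 1) (ℓ - 1) * fK k (n - ℓ) =
        ∑ ℓ ∈ F0, (Finset.univ.filter (fun w : Equiv.Perm (Fin n) =>
          (permVal n w 1 = m ∧ KD.NDF k n w (KD.runLen n w + 1)) ∧
            (ℓ ≤ KD.runLen n w ∧ KD.runLen n w ≤ ℓ + k - 1))).card := by
      apply Finset.sum_congr rfl
      intro ℓ hℓ
      rw [hF0, Finset.mem_filter, Finset.mem_Icc] at hℓ
      exact KD.cardA' k n m ℓ hk2 (by omega) hℓ.1.2 hmn
    have e1 : ∑ ℓ ∈ F1, Nat.choose (m - 1) (ℓ - 1) * fK k (n - ℓ) =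
        ∑ ℓ ∈ F1, (Finset.univ.filter (fun w : Equiv.Perm (Fin n) =>
          (permVal n w 1 = m ∧ KD.NDF k n w (KD.runLen n w + 1)) ∧
            (ℓ ≤ KD.runLen n w ∧ KD.runLen n w ≤ ℓ + k - 1))).card := by
      apply Finset.sum_congr rfl
      intro ℓ hℓ
      rw [hF1, Finset.mem_filter, Finset.mem_Icc] at hℓ
      exact KD.cardA' k n m ℓ hk2 hℓ.1.1 hℓ.1.2 hmn
    rw [KD.fKm_card k m n hk2 hn, e0, e1]
    simp only [Finset.card_filter]
    rw [show (∑ ℓ ∈ F0, ∑ w : Equiv.Perm (Fin n),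
        (if (permVal n w 1 = m ∧ KD.NDF k n w (KD.runLen n w + 1)) ∧
          (ℓ ≤ KD.runLen n w ∧ KD.runLen n w ≤ ℓ + k - 1) then 1 else 0)) =
      ∑ w : Equiv.Perm (Fin n), ∑ ℓ ∈ F0,
        (if (permVal n w 1 = m ∧ KD.NDF k n w (KD.runLen n w + 1)) ∧
          (ℓ ≤ KD.runLen n w ∧ KD.runLen n w ≤ ℓ + k - 1) then 1 else 0) from Finset.sum_comm]
    rw [show (∑ ℓ ∈ F1, ∑ w : Equiv.Perm (Fin n),
        (if (permVal n w 1 = m ∧ KD.NDF k n w (KD.runLen n w + 1)) ∧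
          (ℓ ≤ KD.runLen n w ∧ KD.runLen n w ≤ ℓ + k - 1) then 1 else 0)) =
      ∑ w : Equiv.Perm (Fin n), ∑ ℓ ∈ F1,
        (if (permVal n w 1 = m ∧ KD.NDF k n w (KD.runLen n w + 1)) ∧
          (ℓ ≤ KD.runLen n w ∧ KD.runLen n w ≤ ℓ + k - 1) then 1 else 0) from Finset.sum_comm]
    rw [← Finset.sum_add_distrib]
    apply Finset.sum_congr rfl
    intro w _
    by_cases hP : permVal n w 1 = m ∧ KD.NDF k n w (KD.runLen n w + 1)
    · have hr1 : 1 ≤ KD.runLen n w := KD.one_le_runLen n w hn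
      have hrm : KD.runLen n w ≤ m := KD.runLen_le_first hP.1 hn
      have hsum0 : (∑ ℓ ∈ F0, if (permVal n w 1 = m ∧ KD.NDF k n w (KD.runLen n w + 1)) ∧
            (ℓ ≤ KD.runLen n w ∧ KD.runLen n w ≤ ℓ + k - 1) then 1 else 0) =
          (F0.filter (fun ℓ => ℓ ≤ KD.runLen n w ∧ KD.runLen n w ≤ ℓ + k - 1)).card := by
        rw [Finset.card_filter]
        apply Finset.sum_congr rfl
        intro ℓ _
        congr 1
        simp only [eq_iff_iff]
        tauto
      have hsum1 : (∑ ℓ ∈ F1, if (permVal n w 1 = m ∧ KD.NDF k n w (KD.runLen n w + 1)) ∧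
            (ℓ ≤ KD.runLen n w ∧ KD.runLen n w ≤ ℓ + k - 1) then 1 else 0) =
          (F1.filter (fun ℓ => ℓ ≤ KD.runLen n w ∧ KD.runLen n w ≤ ℓ + k - 1)).card := by
        rw [Finset.card_filter]
        apply Finset.sum_congr rfl
        intro ℓ _
        congr 1
        simp only [eq_iff_iff]
        tauto
      rw [hsum0, hsum1, hF0, hF1, Finset.filter_filter, Finset.filter_filter]
      rw [KD.window_one hk2 hr1 hrm]
      by_cases hrk : KD.runLen n w ≤ k - 1
      · rw [if_pos ⟨hP, hrk⟩, KD.window_zero_lt hk2 hrk]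
        simp
      · rw [if_neg (fun hcon => hrk hcon.2),
          KD.window_zero_ge hk2 (by omega) hrm]
        simp
    · have z0 : (∑ ℓ ∈ F0, if (permVal n w 1 = m ∧ KD.NDF k n w (KD.runLen n w + 1)) ∧
          (ℓ ≤ KD.runLen n w ∧ KD.runLen n w ≤ ℓ + k - 1) then 1 else 0) = 0 :=
        Finset.sum_eq_zero (fun ℓ _ => if_neg (fun hcon => hP hcon.1))
      have z1 : (∑ ℓ ∈ F1, if (permVal n w 1 = m ∧ KD.NDF k n w (KD.runLen n w + 1)) ∧
          (ℓ ≤ KD.runLen n w ∧ KD.runLen n w ≤ ℓ + k - 1) then 1 else 0) = 0 :=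
        Finset.sum_eq_zero (fun ℓ _ => if_neg (fun hcon => hP hcon.1))
      rw [if_neg (fun hcon => hP hcon.1), z0, z1]
  have hcast := congrArg (fun x : ℕ => (x : ℤ)) key
  push_cast at hcast
  linarith
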